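/- If x ∈ Γ_k^n and x_1 ≥ x_2 ≥ ... ≥ x_n, then s_{k-1}(x) ≥ x_1·x_2·...·x_{k-1}. -/

import Mathlib

open Finset

/-- The `k`-th elementary symmetric polynomial of `x ∈ ℝⁿ`. -/
noncomputable def esymm (n k : ℕ) (x : Fin n → ℝ) : ℝ :=
  ∑ A ∈ Finset.powersetCard k (Finset.univ : Finset (Fin n)), ∏ i ∈ A, x i

/-- The Gårding cone `Γₖⁿ = {x : sₗ(x) > 0, l = 1,…,k}`. -/
def GammaK (n k : ℕ) (x : Fin n → ℝ) : Prop :=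
  ∀ l, 1 ≤ l → l ≤ k → 0 < esymm n l x

namespace GardingAux

open Polynomial

lemma mesymm_zero (s : Multiset ℝ) : s.esymm 0 = 1 := by
  simp [Multiset.esymm, Multiset.powersetCard_zero_left]

lemma mesymm_eq_zero {s : Multiset ℝ} {l : ℕ} (h : Multiset.card s < l) : s.esymm l = 0 := by
  simp [Multiset.esymm, Multiset.powersetCard_eq_empty _ h]

lemma mesymm_cons (a : ℝ) (s : Multiset ℝ) (l : ℕ) :
    (a ::ₘ s).esymm (l+1) = s.esymm (l+1) + a * s.esymm l := by
  simp only [Multiset.esymm, Multiset.powersetCard_cons, Multiset.map_add, Multiset.sum_add,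
    Multiset.map_map, Function.comp_def, Multiset.prod_cons]
  rw [← Multiset.sum_map_mul_left]

lemma mesymm_nonneg {s : Multiset ℝ} (h : ∀ a ∈ s, 0 ≤ a) (l : ℕ) : 0 ≤ s.esymm l := by
  apply Multiset.sum_nonneg
  intro x hx
  obtain ⟨t, ht, rfl⟩ := Multiset.mem_map.1 hx
  exact Multiset.prod_nonneg fun a ha => h a (Multiset.mem_of_le (Multiset.mem_powersetCard.1 ht).1 ha)

lemma mesymm_pos {s : Multiset ℝ} (h : ∀ a ∈ s, 0 < a) {l : ℕ} (hl : l ≤ Multiset.card s) :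
    0 < s.esymm l := by
  have hne : (s.powersetCard l) ≠ 0 := by
    intro h0
    have := Multiset.card_powersetCard l s
    rw [h0] at this
    simp only [Multiset.card_zero] at this
    exact absurd (Nat.choose_pos hl) (by omega)
  obtain ⟨t, ht⟩ := Multiset.exists_mem_of_ne_zero hne
  have hpos : ∀ x ∈ (s.powersetCard l).map Multiset.prod, 0 ≤ x := by
    intro x hx
    obtain ⟨t', ht', rfl⟩ := Multiset.mem_map.1 hx
    exact le_of_lt <| Multiset.prod_pos fun a ha => h a (Multiset.mem_of_le (Multiset.mem_powersetCard.1 ht').1 ha)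
  have hmem : (t.prod : ℝ) ∈ (s.powersetCard l).map Multiset.prod := Multiset.mem_map_of_mem _ ht
  have : 0 < t.prod := Multiset.prod_pos fun a ha => h a (Multiset.mem_of_le (Multiset.mem_powersetCard.1 ht).1 ha)
  calc 0 < t.prod := this
    _ ≤ _ := Multiset.single_le_sum hpos _ hmem

lemma exists_max {s : Multiset ℝ} (h : s ≠ 0) : ∃ a ∈ s, ∀ b ∈ s, b ≤ a := by
  induction s using Multiset.induction_on with
  | empty => exact absurd rfl h
  | cons c t ih =>
    rcases eq_or_ne t 0 with rfl | ht
    · refine ⟨c, Multiset.mem_cons_self _ _, ?_⟩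
      intro b hb
      rw [Multiset.mem_cons] at hb
      rcases hb with rfl | hb
      · rfl
      · simp at hb
    · obtain ⟨a, ha, hmax⟩ := ih ht
      rcases le_total a c with hac | hca
      · refine ⟨c, Multiset.mem_cons_self _ _, ?_⟩
        intro b hb
        rw [Multiset.mem_cons] at hb
        rcases hb with rfl | hb
        · rfl
        · exact (hmax b hb).trans hac
      · refine ⟨a, Multiset.mem_cons_of_mem ha, ?_⟩
        intro b hb
        rw [Multiset.mem_cons] at hb
        rcases hb with rfl | hb
        · exact hca
        · exact hmax b hb

lemma exists_min {s : Multiset ℝ} (h : s ≠ 0) : ∃ a ∈ s, ∀ b ∈ s, a ≤ b := by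
  obtain ⟨a, ha, hmax⟩ := exists_max (s := s.map Neg.neg) (by simpa using h)
  obtain ⟨a', ha', rfl⟩ := Multiset.mem_map.1 ha
  exact ⟨a', ha', fun b hb => by
    have := hmax (-b) (Multiset.mem_map_of_mem _ hb); linarith⟩

lemma keyCS (d : ℕ) (hd : 2 ≤ d) (y : Fin d → ℝ) :
    2*(d:ℝ)*(∑ A ∈ powersetCard d (univ : Finset (Fin d)), ∏ i ∈ A, y i) *
        (∑ A ∈ powersetCard (d-2) (univ : Finset (Fin d)), ∏ i ∈ A, y i)
    ≤ ((d:ℝ)-1) * (∑ A ∈ powersetCard (d-1) (univ : Finset (Fin d)), ∏ i ∈ A, y i)^2 := by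
  classical
  have hcard : (univ : Finset (Fin d)).card = d := by simp
  set Pr : ℝ := ∏ i, y i with hPr
  set Q : Fin d → ℝ := fun i => ∏ j ∈ univ.erase i, y j with hQ
  -- S_d = Pr
  have hSd : (∑ A ∈ powersetCard d (univ : Finset (Fin d)), ∏ i ∈ A, y i) = Pr := by
    have h1 := powersetCard_self (univ : Finset (Fin d))
    rw [hcard] at h1
    rw [h1, sum_singleton]
  -- S_{d-1} = ∑ Q
  have himg1 : (univ : Finset (Fin d)).image (fun i => univ.erase i) = powersetCard (d-1) univ := by
    ext A
    simp only [mem_image, mem_powersetCard, mem_univ, true_and]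
    constructor
    · rintro ⟨i, -, rfl⟩
      refine ⟨erase_subset _ _, ?_⟩
      rw [card_erase_of_mem (mem_univ i), hcard]
    · rintro ⟨hsub, hcardA⟩
      have hA : A ≠ univ := by
        intro h; rw [h, hcard] at hcardA; omega
      have : (univ \ A).Nonempty := by
        rw [← card_pos, card_sdiff_of_subset (subset_univ A), hcard, hcardA]; omega
      obtain ⟨i, hi⟩ := this
      have hiA : i ∉ A := (mem_sdiff.1 hi).2
      refine ⟨i, ?_⟩
      have h1 : A ⊆ univ.erase i := subset_erase.2 ⟨subset_univ A, hiA⟩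
      exact (eq_of_subset_of_card_le h1 (by rw [card_erase_of_mem (mem_univ i), hcard, hcardA])).symm
  have hinj1 : ∀ i ∈ (univ : Finset (Fin d)), ∀ j ∈ univ,
      univ.erase i = univ.erase j → i = j := by
    intro i _ j _ h
    by_contra hne
    have : i ∈ univ.erase j := mem_erase.2 ⟨hne, mem_univ i⟩
    rw [← h] at this
    exact absurd rfl (mem_erase.1 this).1
  have hS1 : (∑ A ∈ powersetCard (d-1) (univ : Finset (Fin d)), ∏ i ∈ A, y i) = ∑ i, Q i := by
    rw [← himg1, sum_image hinj1]
  -- pairs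
  set O : Finset (Fin d × Fin d) := (univ ×ˢ univ).filter (fun p => p.1 < p.2) with hO
  set R : Fin d × Fin d → ℝ := fun p => ∏ j ∈ (univ.erase p.1).erase p.2, y j with hR
  have himg2 : O.image (fun p => (univ.erase p.1).erase p.2) = powersetCard (d-2) univ := by
    ext A
    simp only [mem_image, mem_powersetCard]
    constructor
    · rintro ⟨p, hp, rfl⟩
      have hlt : p.1 < p.2 := (mem_filter.1 hp).2
      have h2 : p.2 ∈ univ.erase p.1 := mem_erase.2 ⟨(ne_of_lt hlt).symm, mem_univ _⟩
      refine ⟨(erase_subset _ _).trans (erase_subset _ _), ?_⟩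
      rw [card_erase_of_mem h2, card_erase_of_mem (mem_univ _), hcard]
      omega
    · rintro ⟨hsub, hcardA⟩
      have hsd : (univ \ A).card = 2 := by
        rw [card_sdiff_of_subset (subset_univ A), hcard, hcardA]; omega
      obtain ⟨i, j, hij, hset⟩ := card_eq_two.1 hsd
      -- wlog i < j
      have key : ∀ a b : Fin d, a < b → univ \ A = {a, b} →
          ∃ p, p ∈ O ∧ (univ.erase p.1).erase p.2 = A := by
        intro a b hab hstr
        have haA : a ∉ A := by
          have : a ∈ univ \ A := by rw [hstr]; exact mem_insert_self _ _
          exact (mem_sdiff.1 this).2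
        have hbA : b ∉ A := by
          have : b ∈ univ \ A := by rw [hstr]; exact mem_insert_of_mem (mem_singleton_self _)
          exact (mem_sdiff.1 this).2
        refine ⟨(a, b), mem_filter.2 ⟨mem_product.2 ⟨mem_univ _, mem_univ _⟩, hab⟩, ?_⟩
        have h1 : A ⊆ (univ.erase a).erase b :=
          subset_erase.2 ⟨subset_erase.2 ⟨subset_univ A, haA⟩, hbA⟩
        have hb : b ∈ univ.erase a := mem_erase.2 ⟨(ne_of_lt hab).symm, mem_univ _⟩
        refine (eq_of_subset_of_card_le h1 ?_).symm
        rw [card_erase_of_mem hb, card_erase_of_mem (mem_univ _), hcard, hcardA]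
        omega
      rcases lt_or_gt_of_ne hij with h | h
      · obtain ⟨p, hp, hpeq⟩ := key i j h hset
        exact ⟨p, hp, hpeq⟩
      · obtain ⟨p, hp, hpeq⟩ := key j i h (by rw [hset]; exact pair_comm i j)
        exact ⟨p, hp, hpeq⟩
  have hmemchar : ∀ p : Fin d × Fin d, p.1 < p.2 → ∀ x : Fin d,
      (x ∈ (univ.erase p.1).erase p.2 ↔ (x ≠ p.1 ∧ x ≠ p.2)) := by
    intro p hp x
    simp only [mem_erase, mem_univ, and_true]
    tauto
  have hinj2 : ∀ p ∈ O, ∀ q ∈ O,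
      (univ.erase p.1).erase p.2 = (univ.erase q.1).erase q.2 → p = q := by
    intro p hp q hq h
    have hplt : p.1 < p.2 := (mem_filter.1 hp).2
    have hqlt : q.1 < q.2 := (mem_filter.1 hq).2
    have hp1 : p.1 = q.1 ∨ p.1 = q.2 := by
      by_contra hcon
      push_neg at hcon
      have : p.1 ∈ (univ.erase q.1).erase q.2 := (hmemchar q hqlt p.1).2 ⟨hcon.1, hcon.2⟩
      rw [← h] at this
      exact absurd rfl ((hmemchar p hplt p.1).1 this).1
    have hp2 : p.2 = q.1 ∨ p.2 = q.2 := by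
      by_contra hcon
      push_neg at hcon
      have : p.2 ∈ (univ.erase q.1).erase q.2 := (hmemchar q hqlt p.2).2 ⟨hcon.1, hcon.2⟩
      rw [← h] at this
      exact absurd rfl ((hmemchar p hplt p.2).1 this).2
    have hq1 : q.1 = p.1 ∨ q.1 = p.2 := by
      by_contra hcon
      push_neg at hcon
      have : q.1 ∈ (univ.erase p.1).erase p.2 := (hmemchar p hplt q.1).2 ⟨hcon.1, hcon.2⟩
      rw [h] at this
      exact absurd rfl ((hmemchar q hqlt q.1).1 this).1
    have hv : p.1.val = q.1.val ∧ p.2.val = q.2.val := by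
      have a1 : p.1.val < p.2.val := hplt
      have a2 : q.1.val < q.2.val := hqlt
      have b1 : p.1.val = q.1.val ∨ p.1.val = q.2.val := by
        rcases hp1 with h' | h'
        · exact Or.inl (congrArg Fin.val h')
        · exact Or.inr (congrArg Fin.val h')
      have b2 : p.2.val = q.1.val ∨ p.2.val = q.2.val := by
        rcases hp2 with h' | h'
        · exact Or.inl (congrArg Fin.val h')
        · exact Or.inr (congrArg Fin.val h')
      have b3 : q.1.val = p.1.val ∨ q.1.val = p.2.val := by
        rcases hq1 with h' | h'
        · exact Or.inl (congrArg Fin.val h')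
        · exact Or.inr (congrArg Fin.val h')
      omega
    exact Prod.ext (Fin.val_injective hv.1) (Fin.val_injective hv.2)
  have hS2 : (∑ A ∈ powersetCard (d-2) (univ : Finset (Fin d)), ∏ i ∈ A, y i)
      = ∑ p ∈ O, R p := by
    rw [← himg2, sum_image hinj2]
  -- pairwise identity
  have hpair : ∀ p ∈ O, Pr * R p = Q p.1 * Q p.2 := by
    intro p hp
    have hplt : p.1 < p.2 := (mem_filter.1 hp).2
    have h2 : p.2 ∈ univ.erase p.1 := mem_erase.2 ⟨(ne_of_lt hplt).symm, mem_univ _⟩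
    have h1 : p.1 ∈ univ.erase p.2 := mem_erase.2 ⟨ne_of_lt hplt, mem_univ _⟩
    have e1 : Pr = y p.1 * Q p.1 := (mul_prod_erase univ y (mem_univ p.1)).symm
    have e2 : Q p.1 = y p.2 * R p := (mul_prod_erase (univ.erase p.1) y h2).symm
    have e3 : Q p.2 = y p.1 * ∏ j ∈ (univ.erase p.2).erase p.1, y j :=
      (mul_prod_erase (univ.erase p.2) y h1).symm
    have e4 : (univ.erase p.2).erase p.1 = (univ.erase p.1).erase p.2 := by
      ext x; simp only [mem_erase, mem_univ, and_true]; tauto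
    rw [e1, e2, e3, e4]
    ring
  -- square expansion
  have hsquare : (∑ i, Q i)^2 = (∑ i, (Q i)^2) + 2 * ∑ p ∈ O, Q p.1 * Q p.2 := by
    have h0 : (∑ i, Q i)^2 = ∑ p ∈ univ ×ˢ univ, Q p.1 * Q p.2 := by
      rw [sq, sum_mul_sum]
      rw [sum_product]
    rw [h0, ← sum_filter_add_sum_filter_not (univ ×ˢ univ) (fun p => p.1 < p.2)]
    have hsplit2 := sum_filter_add_sum_filter_not
      ((univ ×ˢ univ).filter (fun p : Fin d × Fin d => ¬ p.1 < p.2))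
      (fun p => p.2 < p.1) (fun p => Q p.1 * Q p.2)
    have hOswap : ((univ ×ˢ univ).filter (fun p : Fin d × Fin d => ¬ p.1 < p.2)).filter
        (fun p => p.2 < p.1) = (univ ×ˢ univ).filter (fun p : Fin d × Fin d => p.2 < p.1) := by
      rw [filter_filter]
      apply filter_congr
      intro p _
      constructor
      · rintro ⟨-, h⟩; exact h
      · intro h; exact ⟨asymm h, h⟩
    have hdiag : ((univ ×ˢ univ).filter (fun p : Fin d × Fin d => ¬ p.1 < p.2)).filter
        (fun p => ¬ p.2 < p.1) = univ.image (fun i => (i, i)) := by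
      rw [filter_filter]
      ext p
      simp only [mem_filter, mem_product, mem_univ, true_and, and_true, mem_image]
      constructor
      · rintro ⟨h1, h2⟩
        have h3 : p.1 = p.2 := le_antisymm (not_lt.1 h2) (not_lt.1 h1)
        exact ⟨p.1, by simp [Prod.ext_iff, h3]⟩
      · rintro ⟨i, rfl⟩
        simp
    have hdiagsum : ∑ p ∈ univ.image (fun i : Fin d => (i, i)), Q p.1 * Q p.2
        = ∑ i, (Q i)^2 := by
      rw [sum_image (by intro a _ b _ h; exact (Prod.ext_iff.1 h).1)]
      simp [sq]
    have hswapsum : ∑ p ∈ (univ ×ˢ univ).filter (fun p : Fin d × Fin d => p.2 < p.1),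
        Q p.1 * Q p.2 = ∑ p ∈ O, Q p.1 * Q p.2 := by
      apply sum_nbij' (fun p => (p.2, p.1)) (fun p => (p.2, p.1))
      · intro p hp
        simp only [hO, mem_filter, mem_product, mem_univ, true_and] at hp ⊢
        exact hp
      · intro p hp
        simp only [hO, mem_filter, mem_product, mem_univ, true_and] at hp ⊢
        exact hp
      · intro p _; rfl
      · intro p _; rfl
      · intro p _; ring
    rw [← hsplit2, hOswap, hdiag, hdiagsum, hswapsum]
    ring
  -- Cauchy-Schwarz
  have hCS : (∑ i, Q i)^2 ≤ (d:ℝ) * ∑ i, (Q i)^2 := by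
    have := sq_sum_le_card_mul_sum_sq (s := (univ : Finset (Fin d))) (f := Q)
    simpa [hcard] using this
  -- combine
  rw [hSd, hS1, hS2, mul_comm]
  have hPrS2 : Pr * (∑ p ∈ O, R p) = ∑ p ∈ O, Q p.1 * Q p.2 := by
    rw [mul_sum]
    exact sum_congr rfl hpair
  have hd2 : (2:ℝ) ≤ (d:ℝ) := by exact_mod_cast hd
  nlinarith [hsquare, hCS, hPrS2]

lemma esymm_list (L : List ℝ) (j : ℕ) :
    (L : Multiset ℝ).esymm j = ∑ A ∈ powersetCard j (univ : Finset (Fin L.length)), ∏ i ∈ A, L.get i := by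
  rw [← Finset.esymm_map_val]
  congr 1
  have : (univ : Finset (Fin L.length)).val = (List.finRange L.length : Multiset (Fin L.length)) := by
    simp [Fin.univ_def, List.finRange]
  rw [this]
  rw [show ((List.finRange L.length : Multiset (Fin L.length)).map L.get) = ((List.finRange L.length).map L.get : Multiset ℝ) from rfl]
  rw [List.map_get_finRange]

lemma rr (p : ℝ[X]) (hp0 : p ≠ 0) (hp : Multiset.card p.roots = p.natDegree) :
    ∀ k, k ≤ p.natDegree →
      derivative^[k] p ≠ 0 ∧ (derivative^[k] p).natDegree = p.natDegree - k ∧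
        Multiset.card (derivative^[k] p).roots = p.natDegree - k := by
  intro k
  induction k with
  | zero => intro _; exact ⟨hp0, by simp, by simpa using hp⟩
  | succ k ih =>
    intro hk
    obtain ⟨hq0, hqdeg, hqroots⟩ := ih (by omega)
    set q := derivative^[k] p with hq
    have hqd : q.natDegree ≠ 0 := by omega
    have hne : derivative q ≠ 0 := by
      intro h
      exact hqd (natDegree_eq_zero_of_derivative_eq_zero h)
    have hdlt : (derivative q).natDegree < q.natDegree := natDegree_derivative_lt hqd
    have hge : p.natDegree - (k+1) ≤ Multiset.card (derivative q).roots := by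
      have := q.card_roots_le_derivative
      omega
    have hle : Multiset.card (derivative q).roots ≤ (derivative q).natDegree :=
      (derivative q).card_roots'
    have hdeg : (derivative q).natDegree = p.natDegree - (k+1) := by omega
    rw [Function.iterate_succ_apply', ← hq]
    exact ⟨hne, hdeg, by omega⟩

lemma keyCS_multiset (z : Multiset ℝ) (hd : 2 ≤ Multiset.card z) :
    2*(Multiset.card z : ℝ)*(z.esymm (Multiset.card z)) * (z.esymm (Multiset.card z - 2))
    ≤ ((Multiset.card z : ℝ)-1) * (z.esymm (Multiset.card z - 1))^2 := by
  obtain ⟨L, rfl⟩ : ∃ L : List ℝ, (L : Multiset ℝ) = z := ⟨z.toList, z.coe_toList⟩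
  have hcard : Multiset.card (L : Multiset ℝ) = L.length := by simp
  rw [hcard] at *
  rw [esymm_list, esymm_list, esymm_list]
  exact keyCS L.length hd L.get

set_option maxHeartbeats 1000000 in
lemma newton (ν : Multiset ℝ) (j : ℕ) (h : 0 ≤ ν.esymm j * ν.esymm (j+2)) :
    ν.esymm j * ν.esymm (j+2) ≤ (ν.esymm (j+1))^2 := by
  rcases lt_or_ge (Multiset.card ν) (j+2) with hm | hm
  · rw [mesymm_eq_zero hm, mul_zero]
    positivity
  -- main case
  set m := Multiset.card ν with hmdef
  set k₀ := m - j - 2 with hk0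
  set P := (ν.map fun a => X + C a).prod with hP
  have hPmonic : P.Monic := monic_multiset_prod_of_monic _ _ fun a _ => monic_X_add_C a
  have hPdeg : P.natDegree = m := by
    rw [hP, natDegree_multiset_prod_of_monic _ (fun f hf => by
      obtain ⟨a, -, rfl⟩ := Multiset.mem_map.1 hf
      exact monic_X_add_C a)]
    simp [Multiset.map_map, Function.comp_def, natDegree_X_add_C, hmdef]
  have hProots : P.roots = ν.map (fun a => -a) := by
    have e : P = ((ν.map (fun a => -a)).map fun a => X - C a).prod := by
      rw [Multiset.map_map]
      apply congrArg Multiset.prod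
      apply Multiset.map_congr rfl
      intro a _
      simp [sub_neg_eq_add]
    rw [e, roots_multiset_prod_X_sub_C]
  have hPcard : Multiset.card P.roots = P.natDegree := by
    rw [hProots, hPdeg]; simp [hmdef]
  have hk0le : k₀ ≤ P.natDegree := by rw [hPdeg]; omega
  obtain ⟨hg0, hgdeg, hgroots⟩ := rr P hPmonic.ne_zero hPcard k₀ hk0le
  set g := derivative^[k₀] P with hg
  have hgdeg' : g.natDegree = j + 2 := by rw [hgdeg, hPdeg]; omega
  have hgroots' : Multiset.card g.roots = j + 2 := by rw [hgroots, hPdeg]; omega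
  set z := g.roots with hz
  set c := g.leadingCoeff with hc
  have hcoeff : ∀ i, i ≤ j + 2 → g.coeff i = c * (-1)^(j+2-i) * z.esymm (j+2-i) := by
    intro i hi
    have h2 : Multiset.card g.roots = g.natDegree := by rw [hgdeg']; exact hgroots'
    have := Polynomial.coeff_eq_esymm_roots_of_card h2 (k := i) (by rw [hgdeg']; exact hi)
    rw [hgdeg'] at this
    exact this
  have e0 : g.coeff 0 = c * (-1)^(j+2) * z.esymm (j+2) := by simpa using hcoeff 0 (by omega)
  have e1 : g.coeff 1 = c * (-1)^(j+1) * z.esymm (j+1) := by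
    have := hcoeff 1 (by omega)
    have h12 : j + 2 - 1 = j + 1 := by omega
    rwa [h12] at this
  have e2 : g.coeff 2 = c * (-1)^j * z.esymm j := by
    have := hcoeff 2 (by omega)
    have h22 : j + 2 - 2 = j := by omega
    rwa [h22] at this
  have hCS := keyCS_multiset z (by rw [hgroots']; omega)
  rw [hgroots'] at hCS
  have h2a : j + 2 - 2 = j := by omega
  have h2b : j + 2 - 1 = j + 1 := by omega
  rw [h2a, h2b] at hCS
  push_cast at hCS
  -- multiply CS by c^2 and express via coefficients
  have hsign : ((-1:ℝ)^(j+2)) * ((-1)^j) = 1 := by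
    rw [← pow_add]
    exact Even.neg_one_pow ⟨j+1, by ring⟩
  have hsign1 : (((-1:ℝ)^(j+1)))^2 = 1 := by
    rw [← pow_mul]
    exact Even.neg_one_pow ⟨j+1, by ring⟩
  have key1 : 2*((j:ℝ)+2)*(g.coeff 0 * g.coeff 2) ≤ ((j:ℝ)+1)*(g.coeff 1)^2 := by
    have lhs_eq : g.coeff 0 * g.coeff 2 = c^2 * (z.esymm (j+2) * z.esymm j) := by
      rw [e0, e2]
      calc c * (-1)^(j+2) * z.esymm (j+2) * (c * (-1)^j * z.esymm j)
          = (c^2) * (((-1:ℝ)^(j+2)) * ((-1)^j)) * (z.esymm (j+2) * z.esymm j) := by ring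
        _ = c^2 * (z.esymm (j+2) * z.esymm j) := by rw [hsign]; ring
    have rhs_eq : (g.coeff 1)^2 = c^2 * (z.esymm (j+1))^2 := by
      rw [e1]
      calc (c * (-1)^(j+1) * z.esymm (j+1))^2
          = (c^2) * (((-1:ℝ)^(j+1))^2) * (z.esymm (j+1))^2 := by ring
        _ = c^2 * (z.esymm (j+1))^2 := by rw [hsign1]; ring
    rw [lhs_eq, rhs_eq]
    nlinarith [mul_le_mul_of_nonneg_left hCS (sq_nonneg c)]
  -- express coefficients of g via esymm of ν
  have hcoeffP : ∀ i : ℕ, i ≤ 2 → P.coeff (i + k₀) = ν.esymm (j + 2 - i) := by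
    intro i hi
    have hle : i + k₀ ≤ Multiset.card ν := by omega
    have := Multiset.prod_X_add_C_coeff ν hle
    rw [← hP] at this
    rw [this]
    congr 1
    omega
  have f0 : g.coeff 0 = ((k₀.descFactorial k₀ : ℕ):ℝ) * ν.esymm (j+2) := by
    have := coeff_iterate_derivative P 0 (k := k₀)
    rw [← hg] at this
    rw [this, hcoeffP 0 (by omega), nsmul_eq_mul]
    norm_num
  have f1 : g.coeff 1 = (((1+k₀).descFactorial k₀ : ℕ):ℝ) * ν.esymm (j+1) := by
    have := coeff_iterate_derivative P 1 (k := k₀)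
    rw [← hg] at this
    rw [this, hcoeffP 1 (by omega), nsmul_eq_mul]
    norm_num
  have f2 : g.coeff 2 = (((2+k₀).descFactorial k₀ : ℕ):ℝ) * ν.esymm j := by
    have := coeff_iterate_derivative P 2 (k := k₀)
    rw [← hg] at this
    rw [this, hcoeffP 2 (by omega), nsmul_eq_mul]
    norm_num
  -- descFactorial arithmetic
  have hw1 : (1+k₀).descFactorial k₀ = (k₀+1) * k₀.descFactorial k₀ := by
    have a1 := Nat.factorial_mul_descFactorial (show k₀ ≤ 1 + k₀ by omega)
    have a0 : k₀.descFactorial k₀ = k₀.factorial := Nat.descFactorial_self k₀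
    have h1 : 1 + k₀ - k₀ = 1 := by omega
    rw [h1] at a1
    simp only [Nat.factorial_one, one_mul] at a1
    rw [a1, a0, show 1 + k₀ = k₀ + 1 from by omega, Nat.factorial_succ]
  have hw2 : 2 * ((2+k₀).descFactorial k₀) = (k₀+2) * ((1+k₀).descFactorial k₀) := by
    have a2 := Nat.factorial_mul_descFactorial (show k₀ ≤ 2 + k₀ by omega)
    have h1 : 2 + k₀ - k₀ = 2 := by omega
    rw [h1] at a2
    have a1 := Nat.factorial_mul_descFactorial (show k₀ ≤ 1 + k₀ by omega)
    have h2 : 1 + k₀ - k₀ = 1 := by omega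
    rw [h2] at a1
    simp only [Nat.factorial_one, one_mul] at a1
    have e22 : (2:ℕ).factorial = 2 := by decide
    rw [e22] at a2
    have e3 : (2 + k₀).factorial = (k₀+2) * (1+k₀).factorial := by
      rw [show 2 + k₀ = (1 + k₀) + 1 from by omega, Nat.factorial_succ]
      congr 1
      omega
    rw [e3, ← a1] at a2
    exact a2
  -- final arithmetic over ℝ
  set W0 : ℝ := ((k₀.descFactorial k₀ : ℕ):ℝ) with hW0
  set W1 : ℝ := (((1+k₀).descFactorial k₀ : ℕ):ℝ) with hW1
  set W2 : ℝ := (((2+k₀).descFactorial k₀ : ℕ):ℝ) with hW2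
  have hW0pos : 0 < W0 := by
    rw [hW0, Nat.descFactorial_self]
    exact_mod_cast k₀.factorial_pos
  have HW1 : W1 = ((k₀:ℝ)+1) * W0 := by
    rw [hW1, hW0, hw1]
    push_cast
    ring
  have HW2 : W2 = ((k₀:ℝ)+2) * W1 / 2 := by
    have := hw2
    have : ((2 * ((2+k₀).descFactorial k₀) : ℕ) : ℝ) = (((k₀+2) * ((1+k₀).descFactorial k₀) : ℕ):ℝ) := by
      exact_mod_cast congrArg (fun n : ℕ => (n:ℝ)) hw2
    push_cast at this
    rw [hW2, hW1]
    linarith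
  rw [f0, f1, f2] at key1
  rw [HW2, HW1] at key1
  have hj : (0:ℝ) ≤ (j:ℝ) := Nat.cast_nonneg j
  have hk : (0:ℝ) ≤ (k₀:ℝ) := Nat.cast_nonneg k₀
  have hdiff : 0 ≤ (((j:ℝ)+2)*((k₀:ℝ)+2) - ((j:ℝ)+1)*((k₀:ℝ)+1)) := by nlinarith
  have hint : 0 ≤ (((j:ℝ)+2)*((k₀:ℝ)+2) - ((j:ℝ)+1)*((k₀:ℝ)+1)) * (((k₀:ℝ)+1) * W0^2) * (ν.esymm j * ν.esymm (j+2)) :=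
    mul_nonneg (mul_nonneg hdiff (by positivity)) h
  have hpos : (0:ℝ) < ((j:ℝ)+1)*(((k₀:ℝ)+1)^2*W0^2) := by positivity
  have chain : ((j:ℝ)+1)*(((k₀:ℝ)+1)^2*W0^2)*(ν.esymm j * ν.esymm (j+2))
      ≤ ((j:ℝ)+1)*(((k₀:ℝ)+1)^2*W0^2)*((ν.esymm (j+1))^2) := by
    linarith [key1, hint]
  exact (mul_le_mul_iff_right₀ hpos).1 chain

lemma mesymm_one (s : Multiset ℝ) : s.esymm 1 = s.sum := by
  induction s using Multiset.induction_on with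
  | empty => rw [mesymm_eq_zero (by simp), Multiset.sum_zero]
  | cons a t ih =>
    rw [show (1:ℕ) = 0 + 1 from rfl, mesymm_cons, ih, mesymm_zero, Multiset.sum_cons]
    ring

lemma max_pos {s : Multiset ℝ} {a : ℝ} (hmax : ∀ b ∈ s, b ≤ a)
    (hsum : 0 < ((a ::ₘ s)).esymm 1) : 0 < a := by
  rw [mesymm_one] at hsum
  by_contra hle
  push_neg at hle
  have h1 : ∀ b ∈ (a ::ₘ s), b ≤ a := by
    intro b hb
    rw [Multiset.mem_cons] at hb
    rcases hb with rfl | hb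
    · rfl
    · exact hmax b hb
  have h2 := Multiset.sum_le_card_nsmul _ _ h1
  have h3 : (Multiset.card (a ::ₘ s) : ℝ) * a ≤ 0 :=
    mul_nonpos_of_nonneg_of_nonpos (Nat.cast_nonneg _) hle
  rw [nsmul_eq_mul] at h2
  linarith

lemma all_pos_of_gamma_card (s : Multiset ℝ) (k : ℕ) (hcard : Multiset.card s = k)
    (hΓ : ∀ l, 1 ≤ l → l ≤ k → 0 < s.esymm l) : ∀ a ∈ s, 0 < a := by
  intro a ha
  by_contra hle
  push_neg at hle
  have hev : ((s.map fun b => (X:ℝ[X]) + C b).prod).eval (-a) = 0 := by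
    rw [eval_multiset_prod]
    apply Multiset.prod_eq_zero
    rw [Multiset.map_map]
    refine Multiset.mem_map.2 ⟨a, ha, ?_⟩
    simp
  have hev2 : ((s.map fun b => (X:ℝ[X]) + C b).prod).eval (-a)
      = ∑ i ∈ range (k+1), s.esymm i * (-a)^(k-i) := by
    rw [Multiset.prod_X_add_C_eq_sum_esymm, eval_finset_sum]
    simp [hcard]
  have hpos : 0 < ∑ i ∈ range (k+1), s.esymm i * (-a)^(k-i) := by
    apply Finset.sum_pos'
    · intro i hi
      apply mul_nonneg
      · rcases Nat.eq_zero_or_pos i with rfl | hipos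
        · rw [mesymm_zero]; norm_num
        · exact le_of_lt (hΓ i hipos (by simp at hi; omega))
      · apply pow_nonneg; linarith
    · refine ⟨k, by simp, ?_⟩
      have h1 : 0 < s.esymm k := by
        rcases Nat.eq_zero_or_pos k with rfl | hkpos
        · rw [mesymm_zero]; norm_num
        · exact hΓ k hkpos le_rfl
      simpa using h1
  rw [hev] at hev2
  linarith

lemma gamma_del (k : ℕ) (c : ℝ) (w : Multiset ℝ) (hcard : k ≤ Multiset.card w)
    (hmin : ∀ b ∈ w, c ≤ b) (hΓ : ∀ l, 1 ≤ l → l ≤ k → 0 < (c ::ₘ w).esymm l) :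
    ∀ l, 1 ≤ l → l ≤ k → 0 < w.esymm l := by
  intro l
  induction l using Nat.strong_induction_on with
  | _ l ih =>
    intro hl1 hlk
    obtain ⟨l', rfl⟩ : ∃ l', l = l' + 1 := ⟨l-1, by omega⟩
    rcases lt_trichotomy c 0 with hc | hc | hc
    · have hprev : 0 < w.esymm l' := by
        rcases Nat.eq_zero_or_pos l' with rfl | hl'
        · rw [mesymm_zero]; norm_num
        · exact ih l' (by omega) hl' (by omega)
      have hcons := hΓ (l'+1) (by omega) hlk
      rw [mesymm_cons] at hcons
      nlinarith
    · have hcons := hΓ (l'+1) (by omega) hlk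
      rw [mesymm_cons, hc] at hcons
      simpa using hcons
    · exact mesymm_pos (fun b hb => lt_of_lt_of_le hc (hmin b hb)) (by omega)

lemma gamma_core (N : ℕ) : ∀ (s' : Multiset ℝ) (a : ℝ) (k : ℕ), Multiset.card s' = N →
    1 ≤ k → k ≤ N + 1 → (∀ b ∈ s', b ≤ a) →
    (∀ l, 1 ≤ l → l ≤ k → 0 < (a ::ₘ s').esymm l) →
    ∀ l, 1 ≤ l → l ≤ k - 1 → 0 < s'.esymm l := by
  induction N using Nat.strong_induction_on with
  | _ N ih =>
    intro s' a k hN hk1 hkN hmax hΓ l hl1 hlk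
    have hlk' : l + 1 ≤ k := by omega
    rcases eq_or_lt_of_le hkN with heq | hlt
    · -- card s' + 1 = k : everything positive
      have hall : ∀ b ∈ (a ::ₘ s'), 0 < b :=
        all_pos_of_gamma_card (a ::ₘ s') k (by simp [hN]; omega) hΓ
      exact mesymm_pos (fun b hb => hall b (Multiset.mem_cons_of_mem hb)) (by omega)
    · have hkN' : k ≤ N := by omega
      have hs'ne : s' ≠ 0 := by
        intro h0; rw [h0] at hN; simp at hN; omega
      obtain ⟨cmin, hcmem, hcmin⟩ := exists_min hs'ne
      set ν := s'.erase cmin with hν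
      have hs'eq : s' = cmin ::ₘ ν := (Multiset.cons_erase hcmem).symm
      have hνcard : Multiset.card ν = N - 1 := by
        rw [hν, Multiset.card_erase_of_mem hcmem, hN]; rfl
      have hcmina : cmin ≤ a := hmax cmin hcmem
      have hswap : (a ::ₘ s') = cmin ::ₘ (a ::ₘ ν) := by
        rw [hs'eq]; exact Multiset.cons_swap a cmin ν
      have hΓdel : ∀ l', 1 ≤ l' → l' ≤ k → 0 < (a ::ₘ ν).esymm l' := by
        apply gamma_del k cmin (a ::ₘ ν) (by simp [hνcard]; omega)
          (by
            intro b hb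
            rw [Multiset.mem_cons] at hb
            rcases hb with rfl | hb
            · exact hcmina
            · exact hcmin b (Multiset.mem_of_le (Multiset.erase_le _ _) hb))
        intro l' h1 h2
        rw [← hswap]
        exact hΓ l' h1 h2
      have hmaxν : ∀ b ∈ ν, b ≤ a := fun b hb =>
        hmax b (Multiset.mem_of_le (Multiset.erase_le _ _) hb)
      have hIH : ∀ l', 1 ≤ l' → l' ≤ k - 1 → 0 < ν.esymm l' :=
        ih (N-1) (by omega) ν a k hνcard hk1 (by omega) hmaxν hΓdel
      have hapos : 0 < a := max_pos hmax (hΓ 1 le_rfl hk1)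
      obtain ⟨l', rfl⟩ : ∃ l', l = l' + 1 := ⟨l-1, by omega⟩
      rw [hs'eq, mesymm_cons]
      have hA : 0 ≤ ν.esymm l' ∧ (1 ≤ l' → 0 < ν.esymm l') := by
        constructor
        · rcases Nat.eq_zero_or_pos l' with rfl | hl'
          · rw [mesymm_zero]; norm_num
          · exact le_of_lt (hIH l' hl' (by omega))
        · intro hl'; exact hIH l' hl' (by omega)
      have hB : 0 < ν.esymm (l'+1) := hIH (l'+1) (by omega) (by omega)
      rcases le_or_gt 0 cmin with hc0 | hc0
      · nlinarith [hA.1, hB]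
      · by_contra hcon
        push_neg at hcon
        have hApos : 0 < ν.esymm l' := by
          rcases Nat.eq_zero_or_pos l' with rfl | hl'
          · rw [mesymm_zero]; norm_num
          · exact hIH l' hl' (by omega)
        have hup := hΓ (l'+2) (by omega) (by omega)
        have hexp : (a ::ₘ s').esymm (l'+2)
            = (ν.esymm (l'+2) + cmin * ν.esymm (l'+1))
              + a * (ν.esymm (l'+1) + cmin * ν.esymm l') := by
          rw [hs'eq]
          rw [show (a ::ₘ cmin ::ₘ ν) = (a ::ₘ (cmin ::ₘ ν)) from rfl]
          rw [mesymm_cons a (cmin ::ₘ ν) (l'+1), mesymm_cons, mesymm_cons]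
        rw [hexp] at hup
        have ha_np : a * (ν.esymm (l'+1) + cmin * ν.esymm l') ≤ 0 :=
          mul_nonpos_of_nonneg_of_nonpos (le_of_lt hapos) hcon
        have hC2 : 0 < ν.esymm (l'+2) := by nlinarith [mul_pos (neg_pos.2 hc0) hB]
        have hnewton := newton ν l' (le_of_lt (mul_pos hApos hC2))
        nlinarith [mul_nonpos_of_nonpos_of_nonneg hcon (le_of_lt hB),
          mul_pos (by nlinarith [ha_np] : (0:ℝ) < ν.esymm (l'+2) + cmin * ν.esymm (l'+1)) hApos]

lemma mainM (mcard : ℕ) : ∀ (t u : Multiset ℝ), Multiset.card t = mcard → u ≠ 0 →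
    (∀ x ∈ t, ∀ b ∈ u, b ≤ x) →
    (∀ l, 1 ≤ l → l ≤ mcard + 1 → 0 < (t + u).esymm l) →
    t.prod ≤ (t + u).esymm mcard := by
  induction mcard with
  | zero =>
    intro t u hcard _ _ _
    rw [Multiset.card_eq_zero] at hcard
    subst hcard
    rw [Multiset.prod_zero, mesymm_zero]
  | succ m ihm =>
    intro t u hcard hu hdom hΓ
    have htne : t ≠ 0 := by
      intro h0; rw [h0] at hcard; simp at hcard
    obtain ⟨a₁, ha₁, hmaxt⟩ := exists_max htne
    set t' := t.erase a₁ with ht'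
    have hteq : t = a₁ ::ₘ t' := (Multiset.cons_erase ha₁).symm
    have ht'card : Multiset.card t' = m := by
      rw [ht', Multiset.card_erase_of_mem ha₁, hcard]; rfl
    have hsum_eq : t + u = a₁ ::ₘ (t' + u) := by
      rw [hteq]; exact Multiset.cons_add _ _ _
    have hmax' : ∀ b ∈ t' + u, b ≤ a₁ := by
      intro b hb
      rw [Multiset.mem_add] at hb
      rcases hb with hb | hb
      · exact hmaxt b (Multiset.mem_of_le (Multiset.erase_le _ _) hb)
      · exact hdom a₁ ha₁ b hb
    have hucard : 1 ≤ Multiset.card u := by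
      exact Multiset.card_pos.2 hu
    have hΓ' : ∀ l, 1 ≤ l → l ≤ m + 2 → 0 < (a₁ ::ₘ (t' + u)).esymm l := by
      intro l h1 h2
      rw [← hsum_eq]
      exact hΓ l h1 h2
    have hcore := gamma_core (Multiset.card (t' + u)) (t' + u) a₁ (m+2) rfl (by omega)
      (by simp [ht'card]; omega) hmax' hΓ'
    have hΓsub : ∀ l, 1 ≤ l → l ≤ m + 1 → 0 < (t' + u).esymm l := by
      intro l h1 h2
      exact hcore l h1 (by omega)
    have hIH := ihm t' u ht'card hu
      (fun x hx b hb => hdom x (Multiset.mem_of_le (Multiset.erase_le _ _) hx) b hb) hΓsub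
    have hapos : 0 < a₁ := by
      apply max_pos hmax'
      rw [← hsum_eq]
      exact hΓ 1 le_rfl (by omega)
    have htop : 0 < (t' + u).esymm (m+1) := hΓsub (m+1) (by omega) le_rfl
    rw [hsum_eq, mesymm_cons, hteq, Multiset.prod_cons]
    nlinarith [mul_le_mul_of_nonneg_left hIH (le_of_lt hapos)]

end GardingAux

/-- If x ∈ Γₖⁿ is decreasing, then s_{k-1}(x) ≥ x₁·x₂⋯x_{k-1}. -/
theorem esymm_ge_prod_first (n k : ℕ) (hk : 1 ≤ k) (hkn : k ≤ n)
    (x : Fin n → ℝ) (hx : GammaK n k x) (hmono : Antitone x) :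
    esymm n (k - 1) x ≥ ∏ i ∈ Finset.univ.filter (fun i : Fin n => (i : ℕ) < k - 1), x i := by
  classical
  set p : Fin n → Prop := fun i => (i : ℕ) < k - 1 with hp
  set t : Multiset ℝ := ((univ.filter p).val.map x) with ht
  set u : Multiset ℝ := ((univ.filter (fun i => ¬ p i)).val.map x) with hu
  have hbridge : ∀ j : ℕ, esymm n j x = (univ.val.map x).esymm j := by
    intro j
    rw [Finset.esymm_map_val]
    rfl
  have htu : t + u = univ.val.map x := by
    rw [ht, hu, ← Multiset.map_add, Finset.filter_val, Finset.filter_val,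
      Multiset.filter_add_not]
  have hfiltercard : (univ.filter p).card = k - 1 := by
    have himg : (univ.filter p).image Fin.val = Finset.range (k-1) := by
      ext a
      simp only [mem_image, mem_filter, mem_univ, true_and, mem_range, hp]
      constructor
      · rintro ⟨i, hi, rfl⟩; exact hi
      · intro ha
        exact ⟨⟨a, by omega⟩, by simpa using ha, rfl⟩
    have := Finset.card_image_of_injective (univ.filter p) Fin.val_injective
    rw [himg, Finset.card_range] at this
    omega
  have htcard : Multiset.card t = k - 1 := by
    rw [ht, Multiset.card_map, Finset.filter_val, ← Finset.filter_val, ← Finset.card_def]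
    exact hfiltercard
  have hucard : Multiset.card u = n - (k - 1) := by
    have htotal := Finset.card_filter_add_card_filter_not (s := univ) (p := p)
    rw [Finset.card_univ, Fintype.card_fin] at htotal
    have : Multiset.card u = (univ.filter (fun i => ¬ p i)).card := by
      rw [hu, Multiset.card_map]; rfl
    omega
  have hune : u ≠ 0 := by
    intro h0
    rw [h0] at hucard
    simp at hucard
    omega
  have hdom : ∀ a ∈ t, ∀ b ∈ u, b ≤ a := by
    intro a ha b hb
    rw [ht, Multiset.mem_map] at ha
    rw [hu, Multiset.mem_map] at hb
    obtain ⟨i, hi, rfl⟩ := ha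
    obtain ⟨j, hj, rfl⟩ := hb
    have hi' : p i := (Finset.mem_filter.1 (Finset.mem_def.2 hi)).2
    have hj' : ¬ p j := (Finset.mem_filter.1 (Finset.mem_def.2 hj)).2
    rw [hp] at hi' hj'
    simp only [not_lt] at hj'
    apply hmono
    rw [Fin.le_def]
    omega
  have hΓm : ∀ l, 1 ≤ l → l ≤ (k-1) + 1 → 0 < (t + u).esymm l := by
    intro l h1 h2
    rw [htu, ← hbridge]
    exact hx l h1 (by omega)
  have hmain := GardingAux.mainM (k-1) t u htcard hune hdom hΓm
  rw [htu, ← hbridge] at hmain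
  have hprod : t.prod = ∏ i ∈ univ.filter p, x i := by
    rw [ht]
    rfl
  rw [hprod] at hmain
  exact hmain
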